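/- Let p_{X,Y} = p(a,0,λ) and p_{X,Z} = p(a,0,μ) be binary joint distributions with uniform Y- and Z-marginals, a ≥ 0, and λ ≥ a (i.e., Tr p_{X,Y} ≥ p_{X=0}), μ ≥ 0. Then P_{X|Y} ≥ P_{X|Z} implies I(X:Y) ≥ I(X:Z). -/

import Mathlib

noncomputable section

def p00 (a b lam : ℝ) : ℝ := (1 + a + b + lam) / 4
def p01 (a b lam : ℝ) : ℝ := (1 + a - b - lam) / 4
def p10 (a b lam : ℝ) : ℝ := (1 - a + b - lam) / 4
def p11 (a b lam : ℝ) : ℝ := (1 - a - b + lam) / 4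

def pX0 (a : ℝ) : ℝ := (1 + a) / 2
def pX1 (a : ℝ) : ℝ := (1 - a) / 2
def pY0 (b : ℝ) : ℝ := (1 + b) / 2
def pY1 (b : ℝ) : ℝ := (1 - b) / 2

/-- Mutual information of the binary joint distribution `p(a,b,λ)` (natural log). -/
def MI (a b lam : ℝ) : ℝ :=
    p00 a b lam * Real.log (p00 a b lam / (pX0 a * pY0 b))
  + p01 a b lam * Real.log (p01 a b lam / (pX0 a * pY1 b))
  + p10 a b lam * Real.log (p10 a b lam / (pX1 a * pY0 b))
  + p11 a b lam * Real.log (p11 a b lam / (pX1 a * pY1 b))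

/-- Guessing probability of `p(a,b,λ)` (independent of `b`). -/
def Pg (a lam : ℝ) : ℝ := (1 + max |a| |lam|) / 2


def gfun (a t : ℝ) : ℝ :=
    ((1+a+t)/4) * Real.log ((1+a+t)/4)
  + ((1+a-t)/4) * Real.log ((1+a-t)/4)
  + ((1-a+t)/4) * Real.log ((1-a+t)/4)
  + ((1-a-t)/4) * Real.log ((1-a-t)/4)

lemma gfun_hasDeriv (a x : ℝ) (hA : (1+a+x)/4 ≠ 0) (hB : (1+a-x)/4 ≠ 0)
    (hC : (1-a+x)/4 ≠ 0) (hD : (1-a-x)/4 ≠ 0) :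
    HasDerivAt (gfun a)
      ((Real.log ((1+a+x)/4) + 1) * (1/4) + (Real.log ((1+a-x)/4) + 1) * (-(1/4))
       + (Real.log ((1-a+x)/4) + 1) * (1/4) + (Real.log ((1-a-x)/4) + 1) * (-(1/4))) x := by
  have i1 : HasDerivAt (fun t : ℝ => (1+a+t)/4) (1/4) x := by
    simpa using ((hasDerivAt_id x).const_add (1+a)).div_const 4
  have i2 : HasDerivAt (fun t : ℝ => (1+a-t)/4) (-(1/4)) x := by
    have := ((hasDerivAt_id x).const_sub (1+a)).div_const 4; simpa [neg_div] using this
  have i3 : HasDerivAt (fun t : ℝ => (1-a+t)/4) (1/4) x := by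
    simpa using ((hasDerivAt_id x).const_add (1-a)).div_const 4
  have i4 : HasDerivAt (fun t : ℝ => (1-a-t)/4) (-(1/4)) x := by
    have := ((hasDerivAt_id x).const_sub (1-a)).div_const 4; simpa [neg_div] using this
  exact ((((Real.hasDerivAt_mul_log hA).comp x i1).add
    ((Real.hasDerivAt_mul_log hB).comp x i2)).add
    ((Real.hasDerivAt_mul_log hC).comp x i3)).add
    ((Real.hasDerivAt_mul_log hD).comp x i4)

lemma gfun_cont (a : ℝ) : Continuous (gfun a) := by
  have h : Continuous (fun x : ℝ => x * Real.log x) := Real.continuous_mul_log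
  exact ((((h.comp (by continuity)).add (h.comp (by continuity))).add
    (h.comp (by continuity))).add (h.comp (by continuity)))

lemma gfun_mono {a : ℝ} (ha : 0 ≤ a) (ha1 : a ≤ 1) :
    MonotoneOn (gfun a) (Set.Icc 0 (1-a)) := by
  apply monotoneOn_of_deriv_nonneg (convex_Icc _ _) (gfun_cont a).continuousOn
  · rw [interior_Icc]
    intro x hx
    obtain ⟨hx0, hx1⟩ := hx
    have hA : (0:ℝ) < (1+a+x)/4 := by linarith
    have hB : (0:ℝ) < (1+a-x)/4 := by linarith
    have hC : (0:ℝ) < (1-a+x)/4 := by linarith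
    have hD : (0:ℝ) < (1-a-x)/4 := by linarith
    exact ((gfun_hasDeriv a x hA.ne' hB.ne' hC.ne' hD.ne').differentiableAt).differentiableWithinAt
  · rw [interior_Icc]
    intro x hx
    obtain ⟨hx0, hx1⟩ := hx
    have hA : (0:ℝ) < (1+a+x)/4 := by linarith
    have hB : (0:ℝ) < (1+a-x)/4 := by linarith
    have hC : (0:ℝ) < (1-a+x)/4 := by linarith
    have hD : (0:ℝ) < (1-a-x)/4 := by linarith
    rw [(gfun_hasDeriv a x hA.ne' hB.ne' hC.ne' hD.ne').deriv]
    have l1 : Real.log ((1+a-x)/4) ≤ Real.log ((1+a+x)/4) :=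
      Real.log_le_log hB (by linarith)
    have l2 : Real.log ((1-a-x)/4) ≤ Real.log ((1-a+x)/4) :=
      Real.log_le_log hD (by linarith)
    linarith

private lemma term_eq {p q : ℝ} (hp : 0 ≤ p) (hq : 0 < q) :
    p * Real.log (p / q) = p * Real.log p - p * Real.log q := by
  rcases eq_or_lt_of_le hp with h | h
  · simp [← h]
  · rw [Real.log_div (ne_of_gt h) (ne_of_gt hq)]; ring

lemma MI_eq {a t : ℝ} (ha : 0 ≤ a) (ha1 : a < 1)
    (k1 : 0 ≤ (1+a+t)) (k2 : 0 ≤ 1+a-t) (k3 : 0 ≤ 1-a+t) (k4 : 0 ≤ 1-a-t) :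
    MI a 0 t = gfun a t - ((1+a)/2)*Real.log ((1+a)/4) - ((1-a)/2)*Real.log ((1-a)/4) := by
  have hq1 : (0:ℝ) < (1+a)/4 := by linarith
  have hq2 : (0:ℝ) < (1-a)/4 := by linarith
  have e1 : pX0 a * pY0 0 = (1+a)/4 := by unfold pX0 pY0; ring
  have e2 : pX0 a * pY1 0 = (1+a)/4 := by unfold pX0 pY1; ring
  have e3 : pX1 a * pY0 0 = (1-a)/4 := by unfold pX1 pY0; ring
  have e4 : pX1 a * pY1 0 = (1-a)/4 := by unfold pX1 pY1; ring
  have f1 : p00 a 0 t = (1+a+t)/4 := by unfold p00; ring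
  have f2 : p01 a 0 t = (1+a-t)/4 := by unfold p01; ring
  have f3 : p10 a 0 t = (1-a-t)/4 := by unfold p10; ring
  have f4 : p11 a 0 t = (1-a+t)/4 := by unfold p11; ring
  rw [MI, e1, e2, e3, e4, f1, f2, f3, f4,
    term_eq (by linarith) hq1, term_eq (by linarith) hq1,
    term_eq (by linarith) hq2, term_eq (by linarith) hq2, gfun]
  ring

theorem monotonicity_uniform_yz (a lam mu : ℝ) (ha : 0 ≤ a) (hla : a ≤ lam)
    (hmu : 0 ≤ mu)
    (h1 : 0 ≤ p00 a 0 lam) (h2 : 0 ≤ p01 a 0 lam)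
    (h3 : 0 ≤ p10 a 0 lam) (h4 : 0 ≤ p11 a 0 lam)
    (h1' : 0 ≤ p00 a 0 mu) (h2' : 0 ≤ p01 a 0 mu)
    (h3' : 0 ≤ p10 a 0 mu) (h4' : 0 ≤ p11 a 0 mu) :
    Pg a mu ≤ Pg a lam → MI a 0 mu ≤ MI a 0 lam := by
  intro hPg
  simp only [p00, p01, p10, p11] at h1 h2 h3 h4 h1' h2' h3' h4'
  have hlam0 : 0 ≤ lam := le_trans ha hla
  have hlam1 : lam ≤ 1 - a := by linarith
  have hmu1 : mu ≤ 1 - a := by linarith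
  have ha1 : a < 1 := by linarith
  have hml : mu ≤ lam := by
    unfold Pg at hPg
    rw [abs_of_nonneg ha, abs_of_nonneg hmu, abs_of_nonneg hlam0,
      max_eq_right hla] at hPg
    have : max a mu ≤ lam := by linarith
    exact le_trans (le_max_right a mu) this
  rw [MI_eq ha ha1 (by linarith) (by linarith) (by linarith) (by linarith),
    MI_eq ha ha1 (by linarith) (by linarith) (by linarith) (by linarith)]
  have := gfun_mono ha (le_of_lt ha1) ⟨hmu, hmu1⟩ ⟨hlam0, hlam1⟩ hml
  linarith
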